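/- For all real ω, ε, γ, the characteristic polynomial of the matrix A(ω,ε,γ) equals (λ² + ω²)² - 4γ²λ² - ε². Consequently, λ is an eigenvalue of A if and only if (λ² + ω² + 2γλ)(λ² + ω² - 2γλ) = ε². -/

import Mathlib

open Matrix Polynomial

/-- The coefficient matrix `A(ω,ε,γ)` of the coupled-oscillator system of Eq. (27)–(28),
viewed as a complex matrix with real entries. -/
noncomputable def Am (om ep ga : ℝ) : Matrix (Fin 4) (Fin 4) ℂ :=
  !![0, 0, 1, 0;
     0, 0, 0, 1;
     -((om : ℂ) ^ 2), -(ep : ℂ), -2 * (ga : ℂ), 0;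
     -(ep : ℂ), -((om : ℂ) ^ 2), 0, 2 * (ga : ℂ)]

/-- The characteristic polynomial of `A(ω,ε,γ)` is `(λ² + ω²)² - 4γ²λ² - ε²`;
consequently, `λ` is an eigenvalue of `A` iff `(λ²+ω²+2γλ)(λ²+ω²-2γλ) = ε²`. -/
theorem Am_charpoly (om ep ga : ℝ) :
    (Am om ep ga).charpoly
      = (X ^ 2 + C ((om : ℂ) ^ 2)) ^ 2 - C (4 * (ga : ℂ) ^ 2) * X ^ 2 - C ((ep : ℂ) ^ 2) ∧
    (∀ lam : ℂ, lam ∈ spectrum ℂ (Am om ep ga) ↔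
      (lam ^ 2 + (om : ℂ) ^ 2 + 2 * (ga : ℂ) * lam)
        * (lam ^ 2 + (om : ℂ) ^ 2 - 2 * (ga : ℂ) * lam) = (ep : ℂ) ^ 2) := by
  have h1 : (Am om ep ga).charpoly
      = (X ^ 2 + C ((om : ℂ) ^ 2)) ^ 2 - C (4 * (ga : ℂ) ^ 2) * X ^ 2 - C ((ep : ℂ) ^ 2) := by
    rw [Matrix.charpoly]
    simp (config := { decide := true }) [Matrix.det_succ_row_zero, Fin.succAbove,
      Fin.sum_univ_succ, charmatrix_apply, Am, Matrix.one_apply, diagonal, map_ofNat]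
    ring
  refine ⟨h1, fun lam => ?_⟩
  have key : (Am om ep ga).charpoly.eval lam
      = ((Matrix.scalar (Fin 4)) lam - Am om ep ga).det := by
    rw [Matrix.charpoly, ← Polynomial.coe_evalRingHom, RingHom.map_det]
    congr 1
    ext i j
    by_cases h : i = j <;>
      simp [h, charmatrix_apply, Matrix.one_apply, Matrix.diagonal_apply]
  rw [spectrum.mem_iff, Matrix.isUnit_iff_isUnit_det, isUnit_iff_ne_zero, not_not]
  have halg : (algebraMap ℂ (Matrix (Fin 4) (Fin 4) ℂ)) lam = Matrix.scalar (Fin 4) lam := rfl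
  rw [halg, ← key, h1]
  simp only [eval_sub, eval_add, eval_pow, eval_mul, eval_C, eval_X]
  constructor <;> intro h <;> linear_combination h
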